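/- Let H_1, H_2, H_3 be Hermitian operators, H = H_1 + H_2 + H_3, and let S_2(t) = e^{-itH_1/2} e^{-itH_2/2} e^{-itH_3} e^{-itH_2/2} e^{-itH_1/2} be the second-order Suzuki (Strang) formula. Then for all t ≥ 0, ‖S_2(t) − e^{-itH}‖ ≤ t³·( (1/24)‖[H_1,[H_2,H_1]]‖ + (1/12)‖[H_2,[H_2,H_1]]‖ + (1/12)‖[H_3,[H_2,H_1]]‖ + (1/24)‖[H_1,[H_3,H_1]]‖ + (1/12)‖[H_2,[H_3,H_1]]‖ + (1/12)‖[H_3,[H_3,H_1]]‖ + (1/24)‖[H_2,[H_3,H_2]]‖ + (1/12)‖[H_3,[H_3,H_2]]‖ ). -/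

import Mathlib

open NormedSpace

section Helpers

variable {E : Type*} [NormedAddCommGroup E] [InnerProductSpace ℂ E] [FiniteDimensional ℂ E]

/-- One-parameter exponential family `u ↦ exp((u*c)•K)`. -/
noncomputable def Uop (K : E →L[ℂ] E) (c : ℂ) (u : ℝ) : E →L[ℂ] E :=
  exp (((u : ℂ) * c) • K)

variable (K X : E →L[ℂ] E) (c : ℂ)

lemma Uop_zero : Uop K c 0 = 1 := by simp [Uop, exp_zero]

lemma hasDerivAt_Uop (u : ℝ) :
    HasDerivAt (Uop K c) ((c • K) * Uop K c u) u := by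
  have h0 : HasDerivAt (fun z : ℂ => exp (z • (c • K)))
      ((c • K) * exp ((u : ℂ) • (c • K))) (Complex.ofReal u) :=
    hasDerivAt_exp_smul_const' (c • K) ((u : ℝ) : ℂ)
  have hin : HasDerivAt (fun y : ℝ => (y : ℂ)) 1 u := by
    simpa using (hasDerivAt_id u).ofReal_comp
  have h := h0.scomp u hin
  simpa [Uop, smul_smul] using! h

lemma continuous_Uop : Continuous (Uop K c) :=
  continuous_iff_continuousAt.2 fun u => (hasDerivAt_Uop K c u).continuousAt

lemma Uop_mul_neg (u : ℝ) : Uop K c u * Uop K (-c) u = 1 := by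
  letI : NormedAlgebra ℚ (E →L[ℂ] E) := NormedAlgebra.restrictScalars ℚ ℂ _
  rw [Uop, Uop, ← exp_add_of_commute (((Commute.refl K).smul_left _).smul_right _),
    ← add_smul]
  have h : (u : ℂ) * c + (u : ℂ) * (-c) = 0 := by ring
  rw [h, zero_smul, exp_zero]

lemma Uop_neg_mul (u : ℝ) : Uop K (-c) u * Uop K c u = 1 := by
  have := Uop_mul_neg K (-c) u
  rwa [neg_neg] at this

lemma Uop_add (y s : ℝ) : Uop K c (y + s) = Uop K c y * Uop K c s := by
  letI : NormedAlgebra ℚ (E →L[ℂ] E) := NormedAlgebra.restrictScalars ℚ ℂ _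
  rw [Uop, Uop, Uop, ← exp_add_of_commute (((Commute.refl K).smul_left _).smul_right _),
    ← add_smul]
  congr 1
  push_cast
  ring

lemma Uop_comm (u : ℝ) : Uop K c u * K = K * Uop K c u :=
  (((Commute.refl K).smul_left ((u : ℂ) * c)).exp_left).eq

lemma norm_Uop_le_one (hK : IsSelfAdjoint K) (hc : (starRingEnd ℂ) c = -c) (u : ℝ) :
    ‖Uop K c u‖ ≤ 1 := by
  letI : NormedAlgebra ℚ (E →L[ℂ] E) := NormedAlgebra.restrictScalars ℚ ℂ _
  set A : E →L[ℂ] E := (((u : ℂ) * c) • K) with hA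
  have hstar : star A = -A := by
    rw [hA, star_smul, hK.star_eq]
    simp only [RCLike.star_def, map_mul, Complex.conj_ofReal, hc]
    rw [mul_neg, neg_smul]
  have h1 : star (exp A) * exp A = 1 := by
    rw [star_exp, hstar, ← exp_add_of_commute (Commute.neg_left (Commute.refl A)),
      neg_add_cancel, exp_zero]
  have h2 : ‖exp A‖ * ‖exp A‖ = ‖(1 : E →L[ℂ] E)‖ := by
    rw [← CStarRing.norm_star_mul_self, h1]
  have h3 : ‖(1 : E →L[ℂ] E)‖ ≤ 1 := by
    rw [ContinuousLinearMap.one_def]; exact ContinuousLinearMap.norm_id_le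
  have h4 : (0:ℝ) ≤ ‖exp A‖ := norm_nonneg _
  show ‖exp A‖ ≤ 1
  nlinarith

lemma norm_conj_le (U V : E →L[ℂ] E) (hU : ‖U‖ ≤ 1) (hV : ‖V‖ ≤ 1) :
    ‖U * X * V‖ ≤ ‖X‖ := by
  have h1 := norm_mul_le (U * X) V
  have h2 := norm_mul_le U X
  have h3 : (0:ℝ) ≤ ‖X‖ := norm_nonneg _
  have h4 : (0:ℝ) ≤ ‖V‖ := norm_nonneg _
  have h5 : (0:ℝ) ≤ ‖U‖ := norm_nonneg _
  have h6 : (0:ℝ) ≤ ‖U * X‖ := norm_nonneg _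
  nlinarith

lemma norm_smul_clm (z : ℂ) (A : E →L[ℂ] E) : ‖z • A‖ = ‖z‖ * ‖A‖ := norm_smul z A

lemma hasDerivAt_conjUop (u : ℝ) :
    HasDerivAt (fun y => Uop K c y * X * Uop K (-c) y)
      (c • (Uop K c u * (K * X - X * K) * Uop K (-c) u)) u := by
  have h := ((hasDerivAt_Uop K c u).mul_const X).mul (hasDerivAt_Uop K (-c) u)
  have hc1 : (c • K) * Uop K c u * X * Uop K (-c) u
      = c • (Uop K c u * (K * X) * Uop K (-c) u) :=
    calc (c • K) * Uop K c u * X * Uop K (-c) u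
        = c • (K * Uop K c u * X * Uop K (-c) u) := by
          simp only [smul_mul_assoc]
      _ = c • (Uop K c u * K * X * Uop K (-c) u) := by rw [← Uop_comm K c u]
      _ = c • (Uop K c u * (K * X) * Uop K (-c) u) := by rw [mul_assoc (Uop K c u) K X]
  have hc2 : Uop K c u * X * ((-c) • K * Uop K (-c) u)
      = -(c • (Uop K c u * (X * K) * Uop K (-c) u)) :=
    calc Uop K c u * X * ((-c) • K * Uop K (-c) u)
        = (-c) • (Uop K c u * X * (K * Uop K (-c) u)) := by
          simp only [smul_mul_assoc, mul_smul_comm]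
      _ = -(c • (Uop K c u * X * (K * Uop K (-c) u))) := by rw [neg_smul]
      _ = -(c • (Uop K c u * (X * K) * Uop K (-c) u)) := by
          rw [mul_assoc (Uop K c u) X, ← mul_assoc X K, ← mul_assoc (Uop K c u) (X * K)]
  rw [hc1, hc2] at h
  have hfin : c • (Uop K c u * (K * X - X * K) * Uop K (-c) u)
      = c • (Uop K c u * (K * X) * Uop K (-c) u)
        + -(c • (Uop K c u * (X * K) * Uop K (-c) u)) := by
    rw [← sub_eq_add_neg, ← smul_sub]
    congr 1
    noncomm_ring
  rw [hfin]
  exact h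

lemma norm_sub_conjUop_le (hK : IsSelfAdjoint K) (hc : (starRingEnd ℂ) c = -c)
    (r : ℝ) (hr : 0 ≤ r) :
    ‖X - Uop K c r * X * Uop K (-c) r‖ ≤ r * ‖c‖ * ‖K * X - X * K‖ := by
  have hcn : (starRingEnd ℂ) (-c) = -(-c) := by rw [map_neg, hc]
  have key := norm_image_sub_le_of_norm_deriv_le_segment'
    (f := fun y => Uop K c y * X * Uop K (-c) y)
    (f' := fun y => c • (Uop K c y * (K * X - X * K) * Uop K (-c) y))
    (a := 0) (b := r) (C := ‖c‖ * ‖K * X - X * K‖)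
    (fun y _ => (hasDerivAt_conjUop K X c y).hasDerivWithinAt)
    (fun y _ => by
      simp only [norm_smul]
      have hconj := norm_conj_le (K * X - X * K) (Uop K c y) (Uop K (-c) y)
        (norm_Uop_le_one K c hK hc y) (norm_Uop_le_one K (-c) hK hcn y)
      have h0 : (0:ℝ) ≤ ‖c‖ := norm_nonneg _
      have hsm := norm_smul c (Uop K c y * (K * X - X * K) * Uop K (-c) y)
      nlinarith [hsm, hconj, h0])
    r ⟨hr, le_rfl⟩
  simp only [Uop_zero, one_mul, mul_one, sub_zero] at key
  calc ‖X - Uop K c r * X * Uop K (-c) r‖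
      = ‖Uop K c r * X * Uop K (-c) r - X‖ := norm_sub_rev _ _
    _ ≤ ‖c‖ * ‖K * X - X * K‖ * r := key
    _ = r * ‖c‖ * ‖K * X - X * K‖ := by ring

lemma norm_sub_conj_peel (U V Y : E →L[ℂ] E) (hU : ‖U‖ ≤ 1) (hV : ‖V‖ ≤ 1) :
    ‖X - U * Y * V‖ ≤ ‖X - U * X * V‖ + ‖X - Y‖ := by
  have h : X - U * Y * V = (X - U * X * V) + U * (X - Y) * V := by noncomm_ring
  rw [h]
  exact (norm_add_le _ _).trans
    (add_le_add le_rfl (norm_conj_le (X - Y) U V hU hV))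

end Helpers

section KeyBound

variable {F : Type*} [NormedAddCommGroup F] [NormedSpace ℝ F] [CompleteSpace F]

/-- FTC-based bound: if `f 0 = 0` and `‖f' y‖ ≤ c₁ y + c₂ (τ - y) + c₃ τ + c₄ y²`
on `[0, τ]`, then `‖f τ‖ ≤ (c₁+c₂) τ²/2 + c₃ τ² + c₄ τ³/3`. -/
lemma key_bound (f f' : ℝ → F) (τ c₁ c₂ c₃ c₄ : ℝ) (hτ : 0 ≤ τ)
    (hc₁ : 0 ≤ c₁) (hc₂ : 0 ≤ c₂) (hc₃ : 0 ≤ c₃) (hc₄ : 0 ≤ c₄)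
    (hf0 : f 0 = 0) (hder : ∀ y, HasDerivAt f (f' y) y) (hcont : Continuous f')
    (hb : ∀ y ∈ Set.Icc 0 τ, ‖f' y‖ ≤ c₁ * y + c₂ * (τ - y) + c₃ * τ + c₄ * y ^ 2) :
    ‖f τ‖ ≤ (c₁ + c₂) * (τ ^ 2 / 2) + c₃ * τ ^ 2 + c₄ * (τ ^ 3 / 3) := by
  have hFTC : ∫ y in (0:ℝ)..τ, f' y = f τ - f 0 :=
    intervalIntegral.integral_eq_sub_of_hasDerivAt (fun y _ => hder y)
      (hcont.intervalIntegrable _ _)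
  set g : ℝ → ℝ := fun y => c₁ * y + c₂ * (τ - y) + c₃ * τ + c₄ * y ^ 2 with hg
  have hgcont : Continuous g := by fun_prop
  have hgint : IntervalIntegrable g MeasureTheory.volume 0 τ := hgcont.intervalIntegrable _ _
  have hae : ∀ᵐ y ∂MeasureTheory.volume.restrict (Set.uIoc (0:ℝ) τ), ‖f' y‖ ≤ g y := by
    refine (MeasureTheory.ae_restrict_iff' measurableSet_uIoc).2 ?_
    refine Filter.Eventually.of_forall fun y hy => ?_
    rw [Set.uIoc_of_le hτ] at hy
    exact hb y ⟨le_of_lt hy.1, hy.2⟩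
  have hnorm := intervalIntegral.norm_integral_le_abs_of_norm_le hae hgint
  rw [hFTC, hf0, sub_zero] at hnorm
  have hP : ∀ y : ℝ, HasDerivAt
      (fun y : ℝ => c₁ * (y ^ 2 / 2) + c₂ * (τ * y - y ^ 2 / 2) + c₃ * (τ * y) + c₄ * (y ^ 3 / 3))
      (g y) y := by
    intro y
    have h1 : HasDerivAt (fun y : ℝ => y ^ 2) (2 * y) y := by
      simpa using hasDerivAt_pow 2 y
    have h2 : HasDerivAt (fun y : ℝ => y ^ 3) (3 * y ^ 2) y := by
      simpa using hasDerivAt_pow 3 y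
    have hid : HasDerivAt (fun y : ℝ => y) 1 y := hasDerivAt_id y
    have h := ((((h1.div_const 2).const_mul c₁).add
      (((hid.const_mul τ).sub (h1.div_const 2)).const_mul c₂)).add
      ((hid.const_mul τ).const_mul c₃)).add ((h2.div_const 3).const_mul c₄)
    refine h.congr_deriv ?_
    rw [hg]; ring
  have hgval : ∫ y in (0:ℝ)..τ, g y
      = (c₁ + c₂) * (τ ^ 2 / 2) + c₃ * τ ^ 2 + c₄ * (τ ^ 3 / 3) := by
    rw [intervalIntegral.integral_eq_sub_of_hasDerivAt (fun y _ => hP y) hgint]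
    ring
  rw [hgval] at hnorm
  have habs : |(c₁ + c₂) * (τ ^ 2 / 2) + c₃ * τ ^ 2 + c₄ * (τ ^ 3 / 3)|
      = (c₁ + c₂) * (τ ^ 2 / 2) + c₃ * τ ^ 2 + c₄ * (τ ^ 3 / 3) := by
    apply abs_of_nonneg
    positivity
  rw [habs] at hnorm
  exact hnorm

end KeyBound

noncomputable section Main

variable {E : Type*} [NormedAddCommGroup E] [InnerProductSpace ℂ E] [FiniteDimensional ℂ E]

def cH : ℂ := -(Complex.I / 2)
def cF : ℂ := -Complex.I

lemma conj_cH : (starRingEnd ℂ) cH = -cH := by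
  have h2 : ((starRingEnd ℂ) 2 : ℂ) = 2 := by simp [Complex.ext_iff]
  simp [cH, h2, Complex.ext_iff]
  norm_num
lemma conj_cF : (starRingEnd ℂ) cF = -cF := by simp [cF]
lemma conj_cH' : (starRingEnd ℂ) (-cH) = -(-cH) := by rw [map_neg, conj_cH]
lemma conj_cF' : (starRingEnd ℂ) (-cF) = -(-cF) := by rw [map_neg, conj_cF]
lemma norm_cH : ‖cH‖ = 1/2 := by
  rw [cH, norm_neg, norm_div]
  simp [Complex.norm_I]
lemma norm_cF : ‖cF‖ = 1 := by simp [cF]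

variable (H₁ H₂ H₃ : E →L[ℂ] E)

/-- The Strang product. -/
def opS (u : ℝ) : E →L[ℂ] E :=
  Uop H₁ cH u * Uop H₂ cH u * Uop H₃ cF u * Uop H₂ cH u * Uop H₁ cH u

/-- The effective generator `G`. -/
def opG (u : ℝ) : E →L[ℂ] E :=
  (2⁻¹ : ℂ) • H₁ + (2⁻¹ : ℂ) • (Uop H₁ cH u * H₂ * Uop H₁ (-cH) u)
    + Uop H₁ cH u * (Uop H₂ cH u * H₃ * Uop H₂ (-cH) u) * Uop H₁ (-cH) u
    + (2⁻¹ : ℂ) • (Uop H₁ cH u * (Uop H₂ cH u * (Uop H₃ cF u * H₂ * Uop H₃ (-cF) u)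
        * Uop H₂ (-cH) u) * Uop H₁ (-cH) u)
    + (2⁻¹ : ℂ) • (Uop H₁ cH u * (Uop H₂ cH u * (Uop H₃ cF u
        * (Uop H₂ cH u * H₁ * Uop H₂ (-cH) u) * Uop H₃ (-cF) u)
        * Uop H₂ (-cH) u) * Uop H₁ (-cH) u)

lemma iUop (K : E →L[ℂ] E) (cc : ℂ) (u : ℝ) (X : E →L[ℂ] E) :
    Uop K (-cc) u * (Uop K cc u * X) = X := by
  rw [← mul_assoc, Uop_neg_mul, one_mul]

lemma dS (u : ℝ) :
    HasDerivAt (opS H₁ H₂ H₃) ((-Complex.I) • (opG H₁ H₂ H₃ u * opS H₁ H₂ H₃ u)) u := by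
  have h := ((((hasDerivAt_Uop H₁ cH u).mul (hasDerivAt_Uop H₂ cH u)).mul
    (hasDerivAt_Uop H₃ cF u)).mul (hasDerivAt_Uop H₂ cH u)).mul (hasDerivAt_Uop H₁ cH u)
  have heq : (((cH • H₁ * Uop H₁ cH u * Uop H₂ cH u
        + Uop H₁ cH u * (cH • H₂ * Uop H₂ cH u)) * Uop H₃ cF u
        + Uop H₁ cH u * Uop H₂ cH u * (cF • H₃ * Uop H₃ cF u)) * Uop H₂ cH u
        + Uop H₁ cH u * Uop H₂ cH u * Uop H₃ cF u * (cH • H₂ * Uop H₂ cH u)) * Uop H₁ cH u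
        + Uop H₁ cH u * Uop H₂ cH u * Uop H₃ cF u * Uop H₂ cH u * (cH • H₁ * Uop H₁ cH u)
      = (-Complex.I) • (opG H₁ H₂ H₃ u * opS H₁ H₂ H₃ u) := by
    simp only [opG, opS, cH, cF]
    simp only [add_mul, smul_mul_assoc, mul_smul_comm, mul_assoc, smul_smul]
    simp only [iUop]
    module
  exact heq ▸ h

/-- The three grouped difference terms (fixed `τ`, variable `y`). -/
def PA (τ y : ℝ) : E →L[ℂ] E :=
  (Uop H₁ cH y * H₃ * Uop H₁ (-cH) y - H₃)
    + (2⁻¹ : ℂ) • (Uop H₁ cH τ * (Uop H₂ cH τ * (Uop H₃ cF y * H₁ * Uop H₃ (-cF) y - H₁)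
        * Uop H₂ (-cH) τ) * Uop H₁ (-cH) τ)

def PB (τ y : ℝ) : E →L[ℂ] E :=
  Uop H₁ cH τ * (Uop H₂ cH y * H₃ * Uop H₂ (-cH) y - H₃) * Uop H₁ (-cH) τ
    + (2⁻¹ : ℂ) • (Uop H₁ cH τ * (Uop H₂ cH τ * (Uop H₃ cF y * H₂ * Uop H₃ (-cF) y - H₂)
        * Uop H₂ (-cH) τ) * Uop H₁ (-cH) τ)

def PC (τ y : ℝ) : E →L[ℂ] E :=
  (Uop H₁ cH y * H₂ * Uop H₁ (-cH) y - H₂)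
    + (2⁻¹ : ℂ) • (Uop H₁ cH τ * (Uop H₂ cH y * H₁ * Uop H₂ (-cH) y - H₁) * Uop H₁ (-cH) τ)
    + (2⁻¹ : ℂ) • (Uop H₁ cH τ * (Uop H₂ cH τ * (Uop H₃ cF τ
        * (Uop H₂ cH y * H₁ * Uop H₂ (-cH) y - H₁) * Uop H₃ (-cF) τ)
        * Uop H₂ (-cH) τ) * Uop H₁ (-cH) τ)

/-- Derivatives in `y` of the grouped terms. -/
def PA' (τ y : ℝ) : E →L[ℂ] E :=
  cH • (Uop H₁ cH y * (H₁ * H₃ - H₃ * H₁) * Uop H₁ (-cH) y)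
    + (2⁻¹ : ℂ) • (Uop H₁ cH τ * (Uop H₂ cH τ
        * (cF • (Uop H₃ cF y * (H₃ * H₁ - H₁ * H₃) * Uop H₃ (-cF) y))
        * Uop H₂ (-cH) τ) * Uop H₁ (-cH) τ)

def PB' (τ y : ℝ) : E →L[ℂ] E :=
  Uop H₁ cH τ * (cH • (Uop H₂ cH y * (H₂ * H₃ - H₃ * H₂) * Uop H₂ (-cH) y)) * Uop H₁ (-cH) τ
    + (2⁻¹ : ℂ) • (Uop H₁ cH τ * (Uop H₂ cH τ
        * (cF • (Uop H₃ cF y * (H₃ * H₂ - H₂ * H₃) * Uop H₃ (-cF) y))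
        * Uop H₂ (-cH) τ) * Uop H₁ (-cH) τ)

def PC' (τ y : ℝ) : E →L[ℂ] E :=
  cH • (Uop H₁ cH y * (H₁ * H₂ - H₂ * H₁) * Uop H₁ (-cH) y)
    + (2⁻¹ : ℂ) • (Uop H₁ cH τ * (cH • (Uop H₂ cH y * (H₂ * H₁ - H₁ * H₂) * Uop H₂ (-cH) y))
        * Uop H₁ (-cH) τ)
    + (2⁻¹ : ℂ) • (Uop H₁ cH τ * (Uop H₂ cH τ * (Uop H₃ cF τ
        * (cH • (Uop H₂ cH y * (H₂ * H₁ - H₁ * H₂) * Uop H₂ (-cH) y)) * Uop H₃ (-cF) τ)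
        * Uop H₂ (-cH) τ) * Uop H₁ (-cH) τ)

lemma dPA (τ y : ℝ) : HasDerivAt (PA H₁ H₂ H₃ τ) (PA' H₁ H₂ H₃ τ y) y :=
  ((hasDerivAt_conjUop H₁ H₃ cH y).sub_const H₃).add
    ((((((hasDerivAt_conjUop H₃ H₁ cF y).sub_const H₁).const_mul
      (Uop H₂ cH τ)).mul_const (Uop H₂ (-cH) τ)).const_mul
      (Uop H₁ cH τ)).mul_const (Uop H₁ (-cH) τ) |>.const_smul (2⁻¹ : ℂ))

lemma dPB (τ y : ℝ) : HasDerivAt (PB H₁ H₂ H₃ τ) (PB' H₁ H₂ H₃ τ y) y :=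
  ((((hasDerivAt_conjUop H₂ H₃ cH y).sub_const H₃).const_mul
      (Uop H₁ cH τ)).mul_const (Uop H₁ (-cH) τ)).add
    ((((((hasDerivAt_conjUop H₃ H₂ cF y).sub_const H₂).const_mul
      (Uop H₂ cH τ)).mul_const (Uop H₂ (-cH) τ)).const_mul
      (Uop H₁ cH τ)).mul_const (Uop H₁ (-cH) τ) |>.const_smul (2⁻¹ : ℂ))

lemma dPC (τ y : ℝ) : HasDerivAt (PC H₁ H₂ H₃ τ) (PC' H₁ H₂ H₃ τ y) y :=
  (((hasDerivAt_conjUop H₁ H₂ cH y).sub_const H₂).add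
    ((((((hasDerivAt_conjUop H₂ H₁ cH y).sub_const H₁).const_mul
      (Uop H₁ cH τ)).mul_const (Uop H₁ (-cH) τ)).const_smul (2⁻¹ : ℂ)))).add
    (((((((((hasDerivAt_conjUop H₂ H₁ cH y).sub_const H₁).const_mul
      (Uop H₃ cF τ)).mul_const (Uop H₃ (-cF) τ)).const_mul
      (Uop H₂ cH τ)).mul_const (Uop H₂ (-cH) τ)).const_mul
      (Uop H₁ cH τ)).mul_const (Uop H₁ (-cH) τ)).const_smul (2⁻¹ : ℂ))

lemma PA_zero (τ : ℝ) : PA H₁ H₂ H₃ τ 0 = 0 := by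
  simp [PA, Uop_zero]

lemma PB_zero (τ : ℝ) : PB H₁ H₂ H₃ τ 0 = 0 := by
  simp [PB, Uop_zero]

lemma PC_zero (τ : ℝ) : PC H₁ H₂ H₃ τ 0 = 0 := by
  simp [PC, Uop_zero]

lemma contPA' (τ : ℝ) : Continuous (PA' H₁ H₂ H₃ τ) := by
  unfold PA'
  refine Continuous.add ?_ ?_
  · exact (((continuous_Uop H₁ cH).mul continuous_const).mul
      (continuous_Uop H₁ (-cH))).const_smul cH
  · exact ((continuous_const.mul ((continuous_const.mul ((((continuous_Uop H₃ cF).mul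
      continuous_const).mul (continuous_Uop H₃ (-cF))).const_smul cF)).mul
      continuous_const)).mul continuous_const).const_smul (2⁻¹ : ℂ)

lemma contPB' (τ : ℝ) : Continuous (PB' H₁ H₂ H₃ τ) := by
  unfold PB'
  refine Continuous.add ?_ ?_
  · exact (continuous_const.mul ((((continuous_Uop H₂ cH).mul continuous_const).mul
      (continuous_Uop H₂ (-cH))).const_smul cH)).mul continuous_const
  · exact ((continuous_const.mul ((continuous_const.mul ((((continuous_Uop H₃ cF).mul
      continuous_const).mul (continuous_Uop H₃ (-cF))).const_smul cF)).mul
      continuous_const)).mul continuous_const).const_smul (2⁻¹ : ℂ)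

lemma contPC' (τ : ℝ) : Continuous (PC' H₁ H₂ H₃ τ) := by
  unfold PC'
  have hb : Continuous (fun y => cH • (Uop H₂ cH y * (H₂ * H₁ - H₁ * H₂) * Uop H₂ (-cH) y)) :=
    (((continuous_Uop H₂ cH).mul continuous_const).mul (continuous_Uop H₂ (-cH))).const_smul cH
  refine (Continuous.add ?_ ?_).add ?_
  · exact (((continuous_Uop H₁ cH).mul continuous_const).mul
      (continuous_Uop H₁ (-cH))).const_smul cH
  · exact ((continuous_const.mul hb).mul continuous_const).const_smul (2⁻¹ : ℂ)
  · exact ((continuous_const.mul ((continuous_const.mul ((continuous_const.mul hb).mul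
      continuous_const)).mul continuous_const)).mul continuous_const).const_smul (2⁻¹ : ℂ)

lemma opG_identity (τ : ℝ) :
    H₁ + H₂ + H₃ - opG H₁ H₂ H₃ τ
      = -(PA H₁ H₂ H₃ τ τ + PB H₁ H₂ H₃ τ τ + PC H₁ H₂ H₃ τ τ) := by
  have cA1 : Uop H₁ cH τ * H₁ * Uop H₁ (-cH) τ = H₁ := by
    rw [Uop_comm H₁ cH τ, mul_assoc, Uop_mul_neg, mul_one]
  have cB2 : Uop H₂ cH τ * H₂ * Uop H₂ (-cH) τ = H₂ := by
    rw [Uop_comm H₂ cH τ, mul_assoc, Uop_mul_neg, mul_one]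
  simp only [PA, PB, PC, opG, mul_sub, sub_mul, smul_sub]
  rw [cA1, cB2]
  module

lemma normPA' (hH₁ : IsSelfAdjoint H₁) (hH₂ : IsSelfAdjoint H₂) (hH₃ : IsSelfAdjoint H₃)
    (τ y : ℝ) (hy0 : 0 ≤ y) (hyτ : y ≤ τ) :
    ‖PA' H₁ H₂ H₃ τ y‖ ≤
      (‖H₃ * (H₁ * H₃ - H₃ * H₁) - (H₁ * H₃ - H₃ * H₁) * H₃‖ / 2) * y
      + (‖H₁ * (H₁ * H₃ - H₃ * H₁) - (H₁ * H₃ - H₃ * H₁) * H₁‖ / 4) * (τ - y)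
      + (‖H₂ * (H₁ * H₃ - H₃ * H₁) - (H₁ * H₃ - H₃ * H₁) * H₂‖ / 4) * τ
      + 0 * y ^ 2 := by
  set Z := H₁ * H₃ - H₃ * H₁ with hZ
  have hτ0 : 0 ≤ τ := le_trans hy0 hyτ
  have hs : 0 ≤ τ - y := by linarith
  have heq : PA' H₁ H₂ H₃ τ y = cH • (Uop H₁ cH y * Z * Uop H₁ (-cH) y
      - Uop H₁ cH τ * (Uop H₂ cH τ * (Uop H₃ cF y * Z * Uop H₃ (-cF) y)
        * Uop H₂ (-cH) τ) * Uop H₁ (-cH) τ) := by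
    simp only [PA']
    rw [show H₃ * H₁ - H₁ * H₃ = -Z from by rw [hZ]; abel, ← hZ]
    simp only [cH, cF, smul_neg, mul_neg, neg_mul, neg_neg, smul_smul, smul_sub,
      mul_sub, sub_mul, mul_smul_comm, smul_mul_assoc]
    module
  rw [heq, norm_smul_clm cH, norm_cH]
  set M := Uop H₂ cH τ * (Uop H₃ cF y * Z * Uop H₃ (-cF) y) * Uop H₂ (-cH) τ with hM
  have hsplit : Uop H₁ cH τ = Uop H₁ cH y * Uop H₁ cH (τ - y) := by
    rw [← Uop_add]; congr 1; ring
  have hsplit' : Uop H₁ (-cH) τ = Uop H₁ (-cH) (τ - y) * Uop H₁ (-cH) y := by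
    rw [← Uop_add]; congr 1; ring
  have hW : Uop H₁ cH y * Z * Uop H₁ (-cH) y - Uop H₁ cH τ * M * Uop H₁ (-cH) τ
      = Uop H₁ cH y * (Z - Uop H₁ cH (τ - y) * M * Uop H₁ (-cH) (τ - y)) * Uop H₁ (-cH) y := by
    rw [hsplit, hsplit']; noncomm_ring
  rw [hW]
  have h1 : ‖Uop H₁ cH y * (Z - Uop H₁ cH (τ - y) * M * Uop H₁ (-cH) (τ - y)) * Uop H₁ (-cH) y‖
      ≤ ‖Z - Uop H₁ cH (τ - y) * M * Uop H₁ (-cH) (τ - y)‖ :=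
    norm_conj_le _ _ _ (norm_Uop_le_one H₁ cH hH₁ conj_cH y)
      (norm_Uop_le_one H₁ (-cH) hH₁ conj_cH' y)
  have h2 : ‖Z - Uop H₁ cH (τ - y) * M * Uop H₁ (-cH) (τ - y)‖
      ≤ ‖Z - Uop H₁ cH (τ - y) * Z * Uop H₁ (-cH) (τ - y)‖ + ‖Z - M‖ :=
    norm_sub_conj_peel Z _ _ M (norm_Uop_le_one H₁ cH hH₁ conj_cH _)
      (norm_Uop_le_one H₁ (-cH) hH₁ conj_cH' _)
  have h3 : ‖Z - Uop H₁ cH (τ - y) * Z * Uop H₁ (-cH) (τ - y)‖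
      ≤ (τ - y) * ‖cH‖ * ‖H₁ * Z - Z * H₁‖ :=
    norm_sub_conjUop_le H₁ Z cH hH₁ conj_cH (τ - y) hs
  have h4 : ‖Z - M‖ ≤ ‖Z - Uop H₂ cH τ * Z * Uop H₂ (-cH) τ‖
      + ‖Z - Uop H₃ cF y * Z * Uop H₃ (-cF) y‖ := by
    rw [hM]
    exact norm_sub_conj_peel Z _ _ _ (norm_Uop_le_one H₂ cH hH₂ conj_cH τ)
      (norm_Uop_le_one H₂ (-cH) hH₂ conj_cH' τ)
  have h5 : ‖Z - Uop H₂ cH τ * Z * Uop H₂ (-cH) τ‖ ≤ τ * ‖cH‖ * ‖H₂ * Z - Z * H₂‖ :=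
    norm_sub_conjUop_le H₂ Z cH hH₂ conj_cH τ hτ0
  have h6 : ‖Z - Uop H₃ cF y * Z * Uop H₃ (-cF) y‖ ≤ y * ‖cF‖ * ‖H₃ * Z - Z * H₃‖ :=
    norm_sub_conjUop_le H₃ Z cF hH₃ conj_cF y hy0
  rw [norm_cH] at h3 h5
  rw [norm_cF] at h6
  linarith

lemma normPB' (hH₁ : IsSelfAdjoint H₁) (hH₂ : IsSelfAdjoint H₂) (hH₃ : IsSelfAdjoint H₃)
    (τ y : ℝ) (hy0 : 0 ≤ y) (hyτ : y ≤ τ) :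
    ‖PB' H₁ H₂ H₃ τ y‖ ≤
      (‖H₃ * (H₂ * H₃ - H₃ * H₂) - (H₂ * H₃ - H₃ * H₂) * H₃‖ / 2) * y
      + (‖H₂ * (H₂ * H₃ - H₃ * H₂) - (H₂ * H₃ - H₃ * H₂) * H₂‖ / 4) * (τ - y)
      + 0 * τ
      + 0 * y ^ 2 := by
  set Z := H₂ * H₃ - H₃ * H₂ with hZ
  have hτ0 : 0 ≤ τ := le_trans hy0 hyτ
  have hs : 0 ≤ τ - y := by linarith
  have heq : PB' H₁ H₂ H₃ τ y = cH • (Uop H₁ cH τ * (Uop H₂ cH y * Z * Uop H₂ (-cH) y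
      - Uop H₂ cH τ * (Uop H₃ cF y * Z * Uop H₃ (-cF) y) * Uop H₂ (-cH) τ)
        * Uop H₁ (-cH) τ) := by
    simp only [PB']
    rw [show H₃ * H₂ - H₂ * H₃ = -Z from by rw [hZ]; abel, ← hZ]
    simp only [cH, cF, smul_neg, mul_neg, neg_mul, neg_neg, smul_smul, smul_sub,
      mul_sub, sub_mul, mul_smul_comm, smul_mul_assoc]
    module
  rw [heq, norm_smul_clm cH, norm_cH]
  set M := Uop H₃ cF y * Z * Uop H₃ (-cF) y with hM
  have hsplit : Uop H₂ cH τ = Uop H₂ cH y * Uop H₂ cH (τ - y) := by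
    rw [← Uop_add]; congr 1; ring
  have hsplit' : Uop H₂ (-cH) τ = Uop H₂ (-cH) (τ - y) * Uop H₂ (-cH) y := by
    rw [← Uop_add]; congr 1; ring
  have hW : Uop H₂ cH y * Z * Uop H₂ (-cH) y - Uop H₂ cH τ * M * Uop H₂ (-cH) τ
      = Uop H₂ cH y * (Z - Uop H₂ cH (τ - y) * M * Uop H₂ (-cH) (τ - y)) * Uop H₂ (-cH) y := by
    rw [hsplit, hsplit']; noncomm_ring
  rw [hW]
  have h0 : ‖Uop H₁ cH τ * (Uop H₂ cH y * (Z - Uop H₂ cH (τ - y) * M * Uop H₂ (-cH) (τ - y))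
        * Uop H₂ (-cH) y) * Uop H₁ (-cH) τ‖
      ≤ ‖Uop H₂ cH y * (Z - Uop H₂ cH (τ - y) * M * Uop H₂ (-cH) (τ - y)) * Uop H₂ (-cH) y‖ :=
    norm_conj_le _ _ _ (norm_Uop_le_one H₁ cH hH₁ conj_cH τ)
      (norm_Uop_le_one H₁ (-cH) hH₁ conj_cH' τ)
  have h1 : ‖Uop H₂ cH y * (Z - Uop H₂ cH (τ - y) * M * Uop H₂ (-cH) (τ - y)) * Uop H₂ (-cH) y‖
      ≤ ‖Z - Uop H₂ cH (τ - y) * M * Uop H₂ (-cH) (τ - y)‖ :=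
    norm_conj_le _ _ _ (norm_Uop_le_one H₂ cH hH₂ conj_cH y)
      (norm_Uop_le_one H₂ (-cH) hH₂ conj_cH' y)
  have h2 : ‖Z - Uop H₂ cH (τ - y) * M * Uop H₂ (-cH) (τ - y)‖
      ≤ ‖Z - Uop H₂ cH (τ - y) * Z * Uop H₂ (-cH) (τ - y)‖ + ‖Z - M‖ :=
    norm_sub_conj_peel Z _ _ M (norm_Uop_le_one H₂ cH hH₂ conj_cH _)
      (norm_Uop_le_one H₂ (-cH) hH₂ conj_cH' _)
  have h3 : ‖Z - Uop H₂ cH (τ - y) * Z * Uop H₂ (-cH) (τ - y)‖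
      ≤ (τ - y) * ‖cH‖ * ‖H₂ * Z - Z * H₂‖ :=
    norm_sub_conjUop_le H₂ Z cH hH₂ conj_cH (τ - y) hs
  have h6 : ‖Z - M‖ ≤ y * ‖cF‖ * ‖H₃ * Z - Z * H₃‖ := by
    rw [hM]
    exact norm_sub_conjUop_le H₃ Z cF hH₃ conj_cF y hy0
  rw [norm_cH] at h3
  rw [norm_cF] at h6
  linarith

lemma normPC' (hH₁ : IsSelfAdjoint H₁) (hH₂ : IsSelfAdjoint H₂) (hH₃ : IsSelfAdjoint H₃)
    (τ y : ℝ) (hy0 : 0 ≤ y) (hyτ : y ≤ τ) :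
    ‖PC' H₁ H₂ H₃ τ y‖ ≤
      (‖H₂ * (H₁ * H₂ - H₂ * H₁) - (H₁ * H₂ - H₂ * H₁) * H₂‖ / 4) * y
      + (‖H₁ * (H₁ * H₂ - H₂ * H₁) - (H₁ * H₂ - H₂ * H₁) * H₁‖ / 4) * (τ - y)
      + (‖H₂ * (H₁ * H₂ - H₂ * H₁) - (H₁ * H₂ - H₂ * H₁) * H₂‖ / 8
          + ‖H₃ * (H₁ * H₂ - H₂ * H₁) - (H₁ * H₂ - H₂ * H₁) * H₃‖ / 4) * τ
      + 0 * y ^ 2 := by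
  set Z := H₁ * H₂ - H₂ * H₁ with hZ
  have hτ0 : 0 ≤ τ := le_trans hy0 hyτ
  have hs : 0 ≤ τ - y := by linarith
  have heq : PC' H₁ H₂ H₃ τ y = ((2⁻¹ : ℂ) * cH) • (Uop H₁ cH y * Z * Uop H₁ (-cH) y
        - Uop H₁ cH τ * (Uop H₂ cH y * Z * Uop H₂ (-cH) y) * Uop H₁ (-cH) τ)
      + ((2⁻¹ : ℂ) * cH) • (Uop H₁ cH y * Z * Uop H₁ (-cH) y
        - Uop H₁ cH τ * (Uop H₂ cH τ * (Uop H₃ cF τ * (Uop H₂ cH y * Z * Uop H₂ (-cH) y)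
            * Uop H₃ (-cF) τ) * Uop H₂ (-cH) τ) * Uop H₁ (-cH) τ) := by
    simp only [PC']
    rw [show H₂ * H₁ - H₁ * H₂ = -Z from by rw [hZ]; abel, ← hZ]
    simp only [cH, cF, smul_neg, mul_neg, neg_mul, neg_neg, smul_smul, smul_sub,
      mul_sub, sub_mul, mul_smul_comm, smul_mul_assoc]
    module
  have hq : ‖((2⁻¹ : ℂ) * cH)‖ = 1 / 4 := by
    rw [norm_mul, norm_cH]
    norm_num
  rw [heq]
  have hD1 : ‖((2⁻¹ : ℂ) * cH) • (Uop H₁ cH y * Z * Uop H₁ (-cH) y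
        - Uop H₁ cH τ * (Uop H₂ cH y * Z * Uop H₂ (-cH) y) * Uop H₁ (-cH) τ)‖
      ≤ 1 / 4 * ((τ - y) * (1 / 2) * ‖H₁ * Z - Z * H₁‖
        + y * (1 / 2) * ‖H₂ * Z - Z * H₂‖) := by
    rw [norm_smul_clm ((2⁻¹ : ℂ) * cH), hq]
    set M := Uop H₂ cH y * Z * Uop H₂ (-cH) y with hM
    have hsplit : Uop H₁ cH τ = Uop H₁ cH y * Uop H₁ cH (τ - y) := by
      rw [← Uop_add]; congr 1; ring
    have hsplit' : Uop H₁ (-cH) τ = Uop H₁ (-cH) (τ - y) * Uop H₁ (-cH) y := by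
      rw [← Uop_add]; congr 1; ring
    have hW : Uop H₁ cH y * Z * Uop H₁ (-cH) y - Uop H₁ cH τ * M * Uop H₁ (-cH) τ
        = Uop H₁ cH y * (Z - Uop H₁ cH (τ - y) * M * Uop H₁ (-cH) (τ - y))
            * Uop H₁ (-cH) y := by
      rw [hsplit, hsplit']; noncomm_ring
    rw [hW]
    have h1 : ‖Uop H₁ cH y * (Z - Uop H₁ cH (τ - y) * M * Uop H₁ (-cH) (τ - y))
          * Uop H₁ (-cH) y‖
        ≤ ‖Z - Uop H₁ cH (τ - y) * M * Uop H₁ (-cH) (τ - y)‖ :=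
      norm_conj_le _ _ _ (norm_Uop_le_one H₁ cH hH₁ conj_cH y)
        (norm_Uop_le_one H₁ (-cH) hH₁ conj_cH' y)
    have h2 : ‖Z - Uop H₁ cH (τ - y) * M * Uop H₁ (-cH) (τ - y)‖
        ≤ ‖Z - Uop H₁ cH (τ - y) * Z * Uop H₁ (-cH) (τ - y)‖ + ‖Z - M‖ :=
      norm_sub_conj_peel Z _ _ M (norm_Uop_le_one H₁ cH hH₁ conj_cH _)
        (norm_Uop_le_one H₁ (-cH) hH₁ conj_cH' _)
    have h3 : ‖Z - Uop H₁ cH (τ - y) * Z * Uop H₁ (-cH) (τ - y)‖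
        ≤ (τ - y) * ‖cH‖ * ‖H₁ * Z - Z * H₁‖ :=
      norm_sub_conjUop_le H₁ Z cH hH₁ conj_cH (τ - y) hs
    have h4 : ‖Z - M‖ ≤ y * ‖cH‖ * ‖H₂ * Z - Z * H₂‖ := by
      rw [hM]
      exact norm_sub_conjUop_le H₂ Z cH hH₂ conj_cH y hy0
    rw [norm_cH] at h3 h4
    linarith
  have hD2 : ‖((2⁻¹ : ℂ) * cH) • (Uop H₁ cH y * Z * Uop H₁ (-cH) y
        - Uop H₁ cH τ * (Uop H₂ cH τ * (Uop H₃ cF τ * (Uop H₂ cH y * Z * Uop H₂ (-cH) y)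
            * Uop H₃ (-cF) τ) * Uop H₂ (-cH) τ) * Uop H₁ (-cH) τ)‖
      ≤ 1 / 4 * ((τ - y) * (1 / 2) * ‖H₁ * Z - Z * H₁‖
        + τ * (1 / 2) * ‖H₂ * Z - Z * H₂‖ + τ * ‖H₃ * Z - Z * H₃‖
        + y * (1 / 2) * ‖H₂ * Z - Z * H₂‖) := by
    rw [norm_smul_clm ((2⁻¹ : ℂ) * cH), hq]
    set M := Uop H₂ cH τ * (Uop H₃ cF τ * (Uop H₂ cH y * Z * Uop H₂ (-cH) y)
        * Uop H₃ (-cF) τ) * Uop H₂ (-cH) τ with hM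
    have hsplit : Uop H₁ cH τ = Uop H₁ cH y * Uop H₁ cH (τ - y) := by
      rw [← Uop_add]; congr 1; ring
    have hsplit' : Uop H₁ (-cH) τ = Uop H₁ (-cH) (τ - y) * Uop H₁ (-cH) y := by
      rw [← Uop_add]; congr 1; ring
    have hW : Uop H₁ cH y * Z * Uop H₁ (-cH) y - Uop H₁ cH τ * M * Uop H₁ (-cH) τ
        = Uop H₁ cH y * (Z - Uop H₁ cH (τ - y) * M * Uop H₁ (-cH) (τ - y))
            * Uop H₁ (-cH) y := by
      rw [hsplit, hsplit']; noncomm_ring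
    rw [hW]
    have h1 : ‖Uop H₁ cH y * (Z - Uop H₁ cH (τ - y) * M * Uop H₁ (-cH) (τ - y))
          * Uop H₁ (-cH) y‖
        ≤ ‖Z - Uop H₁ cH (τ - y) * M * Uop H₁ (-cH) (τ - y)‖ :=
      norm_conj_le _ _ _ (norm_Uop_le_one H₁ cH hH₁ conj_cH y)
        (norm_Uop_le_one H₁ (-cH) hH₁ conj_cH' y)
    have h2 : ‖Z - Uop H₁ cH (τ - y) * M * Uop H₁ (-cH) (τ - y)‖
        ≤ ‖Z - Uop H₁ cH (τ - y) * Z * Uop H₁ (-cH) (τ - y)‖ + ‖Z - M‖ :=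
      norm_sub_conj_peel Z _ _ M (norm_Uop_le_one H₁ cH hH₁ conj_cH _)
        (norm_Uop_le_one H₁ (-cH) hH₁ conj_cH' _)
    have h3 : ‖Z - Uop H₁ cH (τ - y) * Z * Uop H₁ (-cH) (τ - y)‖
        ≤ (τ - y) * ‖cH‖ * ‖H₁ * Z - Z * H₁‖ :=
      norm_sub_conjUop_le H₁ Z cH hH₁ conj_cH (τ - y) hs
    have h4 : ‖Z - M‖ ≤ ‖Z - Uop H₂ cH τ * Z * Uop H₂ (-cH) τ‖
        + ‖Z - Uop H₃ cF τ * (Uop H₂ cH y * Z * Uop H₂ (-cH) y) * Uop H₃ (-cF) τ‖ := by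
      rw [hM]
      exact norm_sub_conj_peel Z _ _ _ (norm_Uop_le_one H₂ cH hH₂ conj_cH τ)
        (norm_Uop_le_one H₂ (-cH) hH₂ conj_cH' τ)
    have h5 : ‖Z - Uop H₂ cH τ * Z * Uop H₂ (-cH) τ‖ ≤ τ * ‖cH‖ * ‖H₂ * Z - Z * H₂‖ :=
      norm_sub_conjUop_le H₂ Z cH hH₂ conj_cH τ hτ0
    have h6 : ‖Z - Uop H₃ cF τ * (Uop H₂ cH y * Z * Uop H₂ (-cH) y) * Uop H₃ (-cF) τ‖
        ≤ ‖Z - Uop H₃ cF τ * Z * Uop H₃ (-cF) τ‖ + ‖Z - Uop H₂ cH y * Z * Uop H₂ (-cH) y‖ :=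
      norm_sub_conj_peel Z _ _ _ (norm_Uop_le_one H₃ cF hH₃ conj_cF τ)
        (norm_Uop_le_one H₃ (-cF) hH₃ conj_cF' τ)
    have h7 : ‖Z - Uop H₃ cF τ * Z * Uop H₃ (-cF) τ‖ ≤ τ * ‖cF‖ * ‖H₃ * Z - Z * H₃‖ :=
      norm_sub_conjUop_le H₃ Z cF hH₃ conj_cF τ hτ0
    have h8 : ‖Z - Uop H₂ cH y * Z * Uop H₂ (-cH) y‖ ≤ y * ‖cH‖ * ‖H₂ * Z - Z * H₂‖ :=
      norm_sub_conjUop_le H₂ Z cH hH₂ conj_cH y hy0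
    rw [norm_cH] at h3 h5 h8
    rw [norm_cF] at h7
    linarith
  refine (norm_add_le _ _).trans ?_
  linarith [hD1, hD2]

set_option maxHeartbeats 3000000 in
theorem strang_aux (H₁ H₂ H₃ H : E →L[ℂ] E)
    (hH₁ : IsSelfAdjoint H₁) (hH₂ : IsSelfAdjoint H₂) (hH₃ : IsSelfAdjoint H₃)
    (hH : H = H₁ + H₂ + H₃) (t : ℝ) (ht : 0 ≤ t) :
    ‖Uop H₁ cH t * Uop H₂ cH t * Uop H₃ cF t * Uop H₂ cH t * Uop H₁ cH t
        - Uop H cF t‖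
      ≤ t ^ 3 * (1 / 24 * ‖⁅H₁, ⁅H₂, H₁⁆⁆‖ + 1 / 12 * ‖⁅H₂, ⁅H₂, H₁⁆⁆‖
          + 1 / 12 * ‖⁅H₃, ⁅H₂, H₁⁆⁆‖ + 1 / 24 * ‖⁅H₁, ⁅H₃, H₁⁆⁆‖
          + 1 / 12 * ‖⁅H₂, ⁅H₃, H₁⁆⁆‖ + 1 / 12 * ‖⁅H₃, ⁅H₃, H₁⁆⁆‖
          + 1 / 24 * ‖⁅H₂, ⁅H₃, H₂⁆⁆‖ + 1 / 12 * ‖⁅H₃, ⁅H₃, H₂⁆⁆‖) := by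

  have sH : IsSelfAdjoint H := by rw [hH]; exact (hH₁.add hH₂).add hH₃
  -- Step 1: bound on ‖H - G τ‖
  have hHG : ∀ τ, 0 ≤ τ → ‖H - opG H₁ H₂ H₃ τ‖ ≤ τ ^ 2 * (‖H₁ * (H₁ * H₃ - H₃ * H₁) - (H₁ * H₃ - H₃ * H₁) * H₁‖ / 8 + ‖H₂ * (H₁ * H₃ - H₃ * H₁) - (H₁ * H₃ - H₃ * H₁) * H₂‖ / 4 + ‖H₃ * (H₁ * H₃ - H₃ * H₁) - (H₁ * H₃ - H₃ * H₁) * H₃‖ / 4 + ‖H₂ * (H₂ * H₃ - H₃ * H₂) - (H₂ * H₃ - H₃ * H₂) * H₂‖ / 8 + ‖H₃ * (H₂ * H₃ - H₃ * H₂) - (H₂ * H₃ - H₃ * H₂) * H₃‖ / 4 + ‖H₁ * (H₁ * H₂ - H₂ * H₁) - (H₁ * H₂ - H₂ * H₁) * H₁‖ / 8 + ‖H₂ * (H₁ * H₂ - H₂ * H₁) - (H₁ * H₂ - H₂ * H₁) * H₂‖ / 4 + ‖H₃ * (H₁ * H₂ - H₂ * H₁) - (H₁ * H₂ - H₂ *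 H₁) * H₃‖ / 4) := by
    intro τ hτ
    have bPA : ‖PA H₁ H₂ H₃ τ τ‖ ≤ (‖H₃ * (H₁ * H₃ - H₃ * H₁) - (H₁ * H₃ - H₃ * H₁) * H₃‖ / 2 + ‖H₁ * (H₁ * H₃ - H₃ * H₁) - (H₁ * H₃ - H₃ * H₁) * H₁‖ / 4) * (τ ^ 2 / 2)
        + (‖H₂ * (H₁ * H₃ - H₃ * H₁) - (H₁ * H₃ - H₃ * H₁) * H₂‖ / 4) * τ ^ 2 + 0 * (τ ^ 3 / 3) :=
      key_bound (PA H₁ H₂ H₃ τ) (PA' H₁ H₂ H₃ τ) τ (‖H₃ * (H₁ * H₃ - H₃ * H₁) - (H₁ * H₃ - H₃ * H₁) * H₃‖ / 2) (‖H₁ * (H₁ * H₃ - H₃ * H₁) - (H₁ * H₃ - H₃ * H₁) * H₁‖ / 4) (‖H₂ * (H₁ * H₃ - H₃ * H₁) - (H₁ * H₃ - H₃ * H₁) * H₂‖ / 4) 0 hτ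
        (by positivity) (by positivity) (by positivity) le_rfl
        (PA_zero H₁ H₂ H₃ τ) (dPA H₁ H₂ H₃ τ) (contPA' H₁ H₂ H₃ τ)
        (fun y hy => normPA' H₁ H₂ H₃ hH₁ hH₂ hH₃ τ y hy.1 hy.2)
    have bPB : ‖PB H₁ H₂ H₃ τ τ‖ ≤ (‖H₃ * (H₂ * H₃ - H₃ * H₂) - (H₂ * H₃ - H₃ * H₂) * H₃‖ / 2 + ‖H₂ * (H₂ * H₃ - H₃ * H₂) - (H₂ * H₃ - H₃ * H₂) * H₂‖ / 4) * (τ ^ 2 / 2)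
        + 0 * τ ^ 2 + 0 * (τ ^ 3 / 3) :=
      key_bound (PB H₁ H₂ H₃ τ) (PB' H₁ H₂ H₃ τ) τ (‖H₃ * (H₂ * H₃ - H₃ * H₂) - (H₂ * H₃ - H₃ * H₂) * H₃‖ / 2) (‖H₂ * (H₂ * H₃ - H₃ * H₂) - (H₂ * H₃ - H₃ * H₂) * H₂‖ / 4) 0 0 hτ
        (by positivity) (by positivity) le_rfl le_rfl
        (PB_zero H₁ H₂ H₃ τ) (dPB H₁ H₂ H₃ τ) (contPB' H₁ H₂ H₃ τ)
        (fun y hy => normPB' H₁ H₂ H₃ hH₁ hH₂ hH₃ τ y hy.1 hy.2)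
    have bPC : ‖PC H₁ H₂ H₃ τ τ‖ ≤ (‖H₂ * (H₁ * H₂ - H₂ * H₁) - (H₁ * H₂ - H₂ * H₁) * H₂‖ / 4 + ‖H₁ * (H₁ * H₂ - H₂ * H₁) - (H₁ * H₂ - H₂ * H₁) * H₁‖ / 4) * (τ ^ 2 / 2)
        + (‖H₂ * (H₁ * H₂ - H₂ * H₁) - (H₁ * H₂ - H₂ * H₁) * H₂‖ / 8 + ‖H₃ * (H₁ * H₂ - H₂ * H₁) - (H₁ * H₂ - H₂ * H₁) * H₃‖ / 4) * τ ^ 2 + 0 * (τ ^ 3 / 3) :=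
      key_bound (PC H₁ H₂ H₃ τ) (PC' H₁ H₂ H₃ τ) τ (‖H₂ * (H₁ * H₂ - H₂ * H₁) - (H₁ * H₂ - H₂ * H₁) * H₂‖ / 4) (‖H₁ * (H₁ * H₂ - H₂ * H₁) - (H₁ * H₂ - H₂ * H₁) * H₁‖ / 4)
        (‖H₂ * (H₁ * H₂ - H₂ * H₁) - (H₁ * H₂ - H₂ * H₁) * H₂‖ / 8 + ‖H₃ * (H₁ * H₂ - H₂ * H₁) - (H₁ * H₂ - H₂ * H₁) * H₃‖ / 4) 0 hτ
        (by positivity) (by positivity) (by positivity) le_rfl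
        (PC_zero H₁ H₂ H₃ τ) (dPC H₁ H₂ H₃ τ) (contPC' H₁ H₂ H₃ τ)
        (fun y hy => normPC' H₁ H₂ H₃ hH₁ hH₂ hH₃ τ y hy.1 hy.2)
    have hid : H - opG H₁ H₂ H₃ τ
        = -(PA H₁ H₂ H₃ τ τ + PB H₁ H₂ H₃ τ τ + PC H₁ H₂ H₃ τ τ) := by
      rw [hH]; exact opG_identity H₁ H₂ H₃ τ
    rw [hid, norm_neg]
    have t1 := norm_add_le (PA H₁ H₂ H₃ τ τ + PB H₁ H₂ H₃ τ τ) (PC H₁ H₂ H₃ τ τ)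
    have t2 := norm_add_le (PA H₁ H₂ H₃ τ τ) (PB H₁ H₂ H₃ τ τ)
    linarith
  -- Step 2: derivative of the interaction-picture error
  have dwi : ∀ u, HasDerivAt (Uop H (-cF)) ((-cF) • H * Uop H (-cF) u) u :=
    fun u => hasDerivAt_Uop H (-cF) u
  have df : ∀ u : ℝ, HasDerivAt (fun u => Uop H (-cF) u * opS H₁ H₂ H₃ u - 1)
      (Uop H (-cF) u * (Complex.I • ((H - opG H₁ H₂ H₃ u) * opS H₁ H₂ H₃ u))) u := by
    intro u
    have h := ((dwi u).mul (dS H₁ H₂ H₃ u)).sub_const 1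
    have hkey : H * (Uop H (-cF) u * opS H₁ H₂ H₃ u)
        = Uop H (-cF) u * (H * opS H₁ H₂ H₃ u) := by
      rw [← mul_assoc, ← Uop_comm H (-cF) u, mul_assoc]
    have heq : (-cF) • H * Uop H (-cF) u * opS H₁ H₂ H₃ u
        + Uop H (-cF) u * ((-Complex.I) • (opG H₁ H₂ H₃ u * opS H₁ H₂ H₃ u))
        = Uop H (-cF) u * (Complex.I • ((H - opG H₁ H₂ H₃ u) * opS H₁ H₂ H₃ u)) := by
      simp only [smul_mul_assoc, mul_smul_comm, sub_mul, smul_sub, mul_sub, mul_assoc]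
      rw [hkey]
      simp only [cF, neg_neg]
      module
    exact heq ▸ h
  -- Step 3: norms
  have nS : ∀ u, ‖opS H₁ H₂ H₃ u‖ ≤ 1 := by
    intro u
    have n1 := norm_Uop_le_one H₁ cH hH₁ conj_cH u
    have n2 := norm_Uop_le_one H₂ cH hH₂ conj_cH u
    have n3 := norm_Uop_le_one H₃ cF hH₃ conj_cF u
    have m1 := norm_mul_le (Uop H₁ cH u) (Uop H₂ cH u)
    have h12 : ‖Uop H₁ cH u * Uop H₂ cH u‖ ≤ 1 := by nlinarith [norm_nonneg (Uop H₂ cH u)]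
    have m2 := norm_mul_le (Uop H₁ cH u * Uop H₂ cH u) (Uop H₃ cF u)
    have h13 : ‖Uop H₁ cH u * Uop H₂ cH u * Uop H₃ cF u‖ ≤ 1 := by
      nlinarith [norm_nonneg (Uop H₃ cF u)]
    have m3 := norm_mul_le (Uop H₁ cH u * Uop H₂ cH u * Uop H₃ cF u) (Uop H₂ cH u)
    have h14 : ‖Uop H₁ cH u * Uop H₂ cH u * Uop H₃ cF u * Uop H₂ cH u‖ ≤ 1 := by
      nlinarith [norm_nonneg (Uop H₂ cH u)]
    have m4 := norm_mul_le (Uop H₁ cH u * Uop H₂ cH u * Uop H₃ cF u * Uop H₂ cH u)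
      (Uop H₁ cH u)
    show ‖Uop H₁ cH u * Uop H₂ cH u * Uop H₃ cF u * Uop H₂ cH u * Uop H₁ cH u‖ ≤ 1
    nlinarith [norm_nonneg (Uop H₁ cH u)]
  have nf' : ∀ u : ℝ, ‖Uop H (-cF) u * (Complex.I • ((H - opG H₁ H₂ H₃ u) * opS H₁ H₂ H₃ u))‖
      ≤ ‖H - opG H₁ H₂ H₃ u‖ := by
    intro u
    have q1 := norm_mul_le (Uop H (-cF) u)
      (Complex.I • ((H - opG H₁ H₂ H₃ u) * opS H₁ H₂ H₃ u))
    have q2 := norm_smul_clm Complex.I ((H - opG H₁ H₂ H₃ u) * opS H₁ H₂ H₃ u)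
    rw [Complex.norm_I, one_mul] at q2
    have q3 := norm_mul_le (H - opG H₁ H₂ H₃ u) (opS H₁ H₂ H₃ u)
    have q4 := nS u
    have q5 := norm_Uop_le_one H (-cF) sH conj_cF' u
    have q6 := norm_nonneg ((H - opG H₁ H₂ H₃ u) * opS H₁ H₂ H₃ u)
    have q7 := norm_nonneg (H - opG H₁ H₂ H₃ u)
    have q8 := norm_nonneg (Complex.I • ((H - opG H₁ H₂ H₃ u) * opS H₁ H₂ H₃ u))
    nlinarith
  -- Step 4: continuity
  have cS : Continuous (opS H₁ H₂ H₃) := by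
    unfold opS
    exact ((((continuous_Uop H₁ cH).mul (continuous_Uop H₂ cH)).mul
      (continuous_Uop H₃ cF)).mul (continuous_Uop H₂ cH)).mul (continuous_Uop H₁ cH)
  have cConjA2 : Continuous (fun u => Uop H₁ cH u * H₂ * Uop H₁ (-cH) u) :=
    ((continuous_Uop H₁ cH).mul continuous_const).mul (continuous_Uop H₁ (-cH))
  have cConjB3 : Continuous (fun u => Uop H₂ cH u * H₃ * Uop H₂ (-cH) u) :=
    ((continuous_Uop H₂ cH).mul continuous_const).mul (continuous_Uop H₂ (-cH))
  have cConjC2 : Continuous (fun u => Uop H₃ cF u * H₂ * Uop H₃ (-cF) u) :=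
    ((continuous_Uop H₃ cF).mul continuous_const).mul (continuous_Uop H₃ (-cF))
  have cConjB1 : Continuous (fun u => Uop H₂ cH u * H₁ * Uop H₂ (-cH) u) :=
    ((continuous_Uop H₂ cH).mul continuous_const).mul (continuous_Uop H₂ (-cH))
  have cG : Continuous (opG H₁ H₂ H₃) := by
    unfold opG
    refine Continuous.add (Continuous.add (Continuous.add
      (Continuous.add continuous_const ?_) ?_) ?_) ?_
    · exact cConjA2.const_smul (2⁻¹ : ℂ)
    · exact ((continuous_Uop H₁ cH).mul cConjB3).mul (continuous_Uop H₁ (-cH))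
    · exact ((((continuous_Uop H₁ cH).mul (((continuous_Uop H₂ cH).mul cConjC2).mul
        (continuous_Uop H₂ (-cH)))).mul (continuous_Uop H₁ (-cH)))).const_smul (2⁻¹ : ℂ)
    · exact ((((continuous_Uop H₁ cH).mul (((continuous_Uop H₂ cH).mul
        (((continuous_Uop H₃ cF).mul cConjB1).mul (continuous_Uop H₃ (-cF)))).mul
        (continuous_Uop H₂ (-cH)))).mul (continuous_Uop H₁ (-cH)))).const_smul (2⁻¹ : ℂ)
  have contf' : Continuous (fun u =>
      Uop H (-cF) u * (Complex.I • ((H - opG H₁ H₂ H₃ u) * opS H₁ H₂ H₃ u))) :=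
    (continuous_Uop H (-cF)).mul (((continuous_const.sub cG).mul cS).const_smul Complex.I)
  -- Step 5: outer FTC bound
  have hf0 : Uop H (-cF) 0 * opS H₁ H₂ H₃ 0 - 1 = (0 : E →L[ℂ] E) := by
    simp [opS, Uop_zero]
  have hft : ‖Uop H (-cF) t * opS H₁ H₂ H₃ t - 1‖
      ≤ (0 + 0) * (t ^ 2 / 2) + 0 * t ^ 2 + (‖H₁ * (H₁ * H₃ - H₃ * H₁) - (H₁ * H₃ - H₃ * H₁) * H₁‖ / 8 + ‖H₂ * (H₁ * H₃ - H₃ * H₁) - (H₁ * H₃ - H₃ * H₁) * H₂‖ / 4 + ‖H₃ * (H₁ * H₃ - H₃ * H₁) - (H₁ * H₃ - H₃ * H₁) * H₃‖ / 4 + ‖H₂ * (H₂ * H₃ - H₃ * H₂) - (H₂ * H₃ - H₃ * H₂) * H₂‖ / 8 + ‖H₃ * (H₂ * H₃ - H₃ * H₂) - (H₂ * H₃ - H₃ * H₂) * H₃‖ / 4 + ‖H₁ * (H₁ * H₂ - H₂ * H₁) - (H₁ * H₂ - H₂ * H₁) * H₁‖ / 8 + ‖H₂ * (H₁ * H₂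 - H₂ * H₁) - (H₁ * H₂ - H₂ * H₁) * H₂‖ / 4 + ‖H₃ * (H₁ * H₂ - H₂ * H₁) - (H₁ * H₂ - H₂ * H₁) * H₃‖ / 4) * (t ^ 3 / 3) :=
    key_bound (fun u => Uop H (-cF) u * opS H₁ H₂ H₃ u - 1)
      (fun u => Uop H (-cF) u * (Complex.I • ((H - opG H₁ H₂ H₃ u) * opS H₁ H₂ H₃ u)))
      t 0 0 0 (‖H₁ * (H₁ * H₃ - H₃ * H₁) - (H₁ * H₃ - H₃ * H₁) * H₁‖ / 8 + ‖H₂ * (H₁ * H₃ - H₃ * H₁) - (H₁ * H₃ - H₃ * H₁) * H₂‖ / 4 + ‖H₃ * (H₁ * H₃ - H₃ * H₁) - (H₁ * H₃ - H₃ * H₁) * H₃‖ / 4 + ‖H₂ * (H₂ * H₃ - H₃ * H₂) - (H₂ * H₃ - H₃ * H₂) * H₂‖ / 8 + ‖H₃ * (H₂ * H₃ - H₃ * H₂) - (H₂ * H₃ - H₃ * H₂) * H₃‖ / 4 + ‖H₁ * (H₁ * H₂ - H₂ * H₁) - (H₁ * H₂ - H₂ * H₁) * H₁‖ / 8 + ‖H₂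 * (H₁ * H₂ - H₂ * H₁) - (H₁ * H₂ - H₂ * H₁) * H₂‖ / 4 + ‖H₃ * (H₁ * H₂ - H₂ * H₁) - (H₁ * H₂ - H₂ * H₁) * H₃‖ / 4) ht le_rfl le_rfl le_rfl (by positivity) hf0 df contf'
      (fun y hy => by
        have q1 := nf' y
        have q2 := hHG y hy.1
        nlinarith [q1, q2])
  -- Step 6: final assembly
  have hid2 : Uop H₁ cH t * Uop H₂ cH t * Uop H₃ cF t * Uop H₂ cH t * Uop H₁ cH t
        - Uop H cF t
      = Uop H cF t * (Uop H (-cF) t * opS H₁ H₂ H₃ t - 1) := by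
    rw [mul_sub, mul_one, ← mul_assoc, Uop_mul_neg H cF t, one_mul, opS]
  rw [hid2]
  have q0 := norm_mul_le (Uop H cF t) (Uop H (-cF) t * opS H₁ H₂ H₃ t - 1)
  have q1 := norm_Uop_le_one H cF sH conj_cF t
  have q2 := norm_nonneg (Uop H (-cF) t * opS H₁ H₂ H₃ t - 1)
  have hmain : ‖Uop H cF t * (Uop H (-cF) t * opS H₁ H₂ H₃ t - 1)‖
      ≤ (‖H₁ * (H₁ * H₃ - H₃ * H₁) - (H₁ * H₃ - H₃ * H₁) * H₁‖ / 8 + ‖H₂ * (H₁ * H₃ - H₃ * H₁) - (H₁ * H₃ - H₃ * H₁) * H₂‖ / 4 + ‖H₃ * (H₁ * H₃ - H₃ * H₁) - (H₁ * H₃ - H₃ * H₁) * H₃‖ / 4 + ‖H₂ * (H₂ * H₃ - H₃ * H₂) - (H₂ * H₃ - H₃ * H₂) * H₂‖ / 8 + ‖H₃ * (H₂ * H₃ - H₃ * H₂) - (H₂ * H₃ - H₃ * H₂) * H₃‖ / 4 + ‖H₁ * (H₁ * H₂ - H₂ * H₁) - (H₁ * H₂ - H₂ * H₁) * H₁‖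 / 8 + ‖H₂ * (H₁ * H₂ - H₂ * H₁) - (H₁ * H₂ - H₂ * H₁) * H₂‖ / 4 + ‖H₃ * (H₁ * H₂ - H₂ * H₁) - (H₁ * H₂ - H₂ * H₁) * H₃‖ / 4) * (t ^ 3 / 3) := by nlinarith
  -- rewrite commutator norms
  have r1 : ‖⁅H₁, ⁅H₂, H₁⁆⁆‖ = ‖H₁ * (H₁ * H₂ - H₂ * H₁) - (H₁ * H₂ - H₂ * H₁) * H₁‖ := by
    simp only [Ring.lie_def]
    rw [show H₁ * (H₂ * H₁ - H₁ * H₂) - (H₂ * H₁ - H₁ * H₂) * H₁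
        = -(H₁ * (H₁ * H₂ - H₂ * H₁) - (H₁ * H₂ - H₂ * H₁) * H₁) from by noncomm_ring, norm_neg]
  have r2 : ‖⁅H₂, ⁅H₂, H₁⁆⁆‖ = ‖H₂ * (H₁ * H₂ - H₂ * H₁) - (H₁ * H₂ - H₂ * H₁) * H₂‖ := by
    simp only [Ring.lie_def]
    rw [show H₂ * (H₂ * H₁ - H₁ * H₂) - (H₂ * H₁ - H₁ * H₂) * H₂
        = -(H₂ * (H₁ * H₂ - H₂ * H₁) - (H₁ * H₂ - H₂ * H₁) * H₂) from by noncomm_ring, norm_neg]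
  have r3 : ‖⁅H₃, ⁅H₂, H₁⁆⁆‖ = ‖H₃ * (H₁ * H₂ - H₂ * H₁) - (H₁ * H₂ - H₂ * H₁) * H₃‖ := by
    simp only [Ring.lie_def]
    rw [show H₃ * (H₂ * H₁ - H₁ * H₂) - (H₂ * H₁ - H₁ * H₂) * H₃
        = -(H₃ * (H₁ * H₂ - H₂ * H₁) - (H₁ * H₂ - H₂ * H₁) * H₃) from by noncomm_ring, norm_neg]
  have r4 : ‖⁅H₁, ⁅H₃, H₁⁆⁆‖ = ‖H₁ * (H₁ * H₃ - H₃ * H₁) - (H₁ * H₃ - H₃ * H₁) * H₁‖ := by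
    simp only [Ring.lie_def]
    rw [show H₁ * (H₃ * H₁ - H₁ * H₃) - (H₃ * H₁ - H₁ * H₃) * H₁
        = -(H₁ * (H₁ * H₃ - H₃ * H₁) - (H₁ * H₃ - H₃ * H₁) * H₁) from by noncomm_ring, norm_neg]
  have r5 : ‖⁅H₂, ⁅H₃, H₁⁆⁆‖ = ‖H₂ * (H₁ * H₃ - H₃ * H₁) - (H₁ * H₃ - H₃ * H₁) * H₂‖ := by
    simp only [Ring.lie_def]
    rw [show H₂ * (H₃ * H₁ - H₁ * H₃) - (H₃ * H₁ - H₁ * H₃) * H₂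
        = -(H₂ * (H₁ * H₃ - H₃ * H₁) - (H₁ * H₃ - H₃ * H₁) * H₂) from by noncomm_ring, norm_neg]
  have r6 : ‖⁅H₃, ⁅H₃, H₁⁆⁆‖ = ‖H₃ * (H₁ * H₃ - H₃ * H₁) - (H₁ * H₃ - H₃ * H₁) * H₃‖ := by
    simp only [Ring.lie_def]
    rw [show H₃ * (H₃ * H₁ - H₁ * H₃) - (H₃ * H₁ - H₁ * H₃) * H₃
        = -(H₃ * (H₁ * H₃ - H₃ * H₁) - (H₁ * H₃ - H₃ * H₁) * H₃) from by noncomm_ring, norm_neg]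
  have r7 : ‖⁅H₂, ⁅H₃, H₂⁆⁆‖ = ‖H₂ * (H₂ * H₃ - H₃ * H₂) - (H₂ * H₃ - H₃ * H₂) * H₂‖ := by
    simp only [Ring.lie_def]
    rw [show H₂ * (H₃ * H₂ - H₂ * H₃) - (H₃ * H₂ - H₂ * H₃) * H₂
        = -(H₂ * (H₂ * H₃ - H₃ * H₂) - (H₂ * H₃ - H₃ * H₂) * H₂) from by noncomm_ring, norm_neg]
  have r8 : ‖⁅H₃, ⁅H₃, H₂⁆⁆‖ = ‖H₃ * (H₂ * H₃ - H₃ * H₂) - (H₂ * H₃ - H₃ * H₂) * H₃‖ := by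
    simp only [Ring.lie_def]
    rw [show H₃ * (H₃ * H₂ - H₂ * H₃) - (H₃ * H₂ - H₂ * H₃) * H₃
        = -(H₃ * (H₂ * H₃ - H₃ * H₂) - (H₂ * H₃ - H₃ * H₂) * H₃) from by noncomm_ring, norm_neg]
  rw [r1, r2, r3, r4, r5, r6, r7, r8]
  calc ‖Uop H cF t * (Uop H (-cF) t * opS H₁ H₂ H₃ t - 1)‖
      ≤ (‖H₁ * (H₁ * H₃ - H₃ * H₁) - (H₁ * H₃ - H₃ * H₁) * H₁‖ / 8 + ‖H₂ * (H₁ * H₃ - H₃ * H₁) - (H₁ * H₃ - H₃ * H₁) * H₂‖ / 4 + ‖H₃ * (H₁ * H₃ - H₃ * H₁) - (H₁ * H₃ - H₃ * H₁) * H₃‖ / 4 + ‖H₂ * (H₂ * H₃ - H₃ * H₂) - (H₂ * H₃ - H₃ * H₂) * H₂‖ / 8 + ‖H₃ * (H₂ * H₃ - H₃ * H₂) - (H₂ * H₃ - H₃ * H₂) * H₃‖ / 4 + ‖H₁ * (H₁ * H₂ - H₂ * H₁) - (H₁ * H₂ - H₂ * H₁) * H₁‖ / 8 + ‖H₂ *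 (H₁ * H₂ - H₂ * H₁) - (H₁ * H₂ - H₂ * H₁) * H₂‖ / 4 + ‖H₃ * (H₁ * H₂ - H₂ * H₁) - (H₁ * H₂ - H₂ * H₁) * H₃‖ / 4) * (t ^ 3 / 3) := hmain
    _ = t ^ 3 * (1 / 24 * ‖H₁ * (H₁ * H₂ - H₂ * H₁) - (H₁ * H₂ - H₂ * H₁) * H₁‖ + 1 / 12 * ‖H₂ * (H₁ * H₂ - H₂ * H₁) - (H₁ * H₂ - H₂ * H₁) * H₂‖
        + 1 / 12 * ‖H₃ * (H₁ * H₂ - H₂ * H₁) - (H₁ * H₂ - H₂ * H₁) * H₃‖ + 1 / 24 * ‖H₁ * (H₁ * H₃ - H₃ * H₁) - (H₁ * H₃ - H₃ * H₁) * H₁‖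
        + 1 / 12 * ‖H₂ * (H₁ * H₃ - H₃ * H₁) - (H₁ * H₃ - H₃ * H₁) * H₂‖ + 1 / 12 * ‖H₃ * (H₁ * H₃ - H₃ * H₁) - (H₁ * H₃ - H₃ * H₁) * H₃‖
        + 1 / 24 * ‖H₂ * (H₂ * H₃ - H₃ * H₂) - (H₂ * H₃ - H₃ * H₂) * H₂‖ + 1 / 12 * ‖H₃ * (H₂ * H₃ - H₃ * H₂) - (H₂ * H₃ - H₃ * H₂) * H₃‖) := by ring


end Main

open NormedSpace in
/-- **Trotter error bound (from Theorem 1 with `s = 3`) for the second-order Suzuki formula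
with three Hermitian terms.** -/
theorem strang_error_bound_three_terms_tight
    {E : Type*} [NormedAddCommGroup E] [InnerProductSpace ℂ E] [FiniteDimensional ℂ E]
    (H₁ H₂ H₃ : E →L[ℂ] E)
    (hH₁ : IsSelfAdjoint H₁) (hH₂ : IsSelfAdjoint H₂) (hH₃ : IsSelfAdjoint H₃)
    (H : E →L[ℂ] E) (hH : H = H₁ + H₂ + H₃) :
    ∀ t : ℝ, 0 ≤ t →
      ‖exp ((-(Complex.I * t) / 2) • H₁) * exp ((-(Complex.I * t) / 2) • H₂) *
          exp ((-(Complex.I * t)) • H₃) * exp ((-(Complex.I * t) / 2) • H₂) *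
          exp ((-(Complex.I * t) / 2) • H₁) - exp ((-(Complex.I * t)) • H)‖
        ≤ t ^ 3 * (1 / 24 * ‖⁅H₁, ⁅H₂, H₁⁆⁆‖ + 1 / 12 * ‖⁅H₂, ⁅H₂, H₁⁆⁆‖
            + 1 / 12 * ‖⁅H₃, ⁅H₂, H₁⁆⁆‖ + 1 / 24 * ‖⁅H₁, ⁅H₃, H₁⁆⁆‖
            + 1 / 12 * ‖⁅H₂, ⁅H₃, H₁⁆⁆‖ + 1 / 12 * ‖⁅H₃, ⁅H₃, H₁⁆⁆‖
            + 1 / 24 * ‖⁅H₂, ⁅H₃, H₂⁆⁆‖ + 1 / 12 * ‖⁅H₃, ⁅H₃, H₂⁆⁆‖) := by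
  intro t ht
  have h1 : ∀ (K : E →L[ℂ] E), exp ((-(Complex.I * t) / 2) • K) = Uop K cH t := by
    intro K
    rw [Uop]
    congr 1
    rw [cH]
    ring
  have h2 : ∀ (K : E →L[ℂ] E), exp ((-(Complex.I * t)) • K) = Uop K cF t := by
    intro K
    rw [Uop]
    congr 1
    rw [cF]
    ring
  rw [h1 H₁, h1 H₂, h2 H₃, h2 H]
  exact strang_aux H₁ H₂ H₃ H hH₁ hH₂ hH₃ hH t ht
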